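/- Let A be a Frobenius category and B ⊆ A an admissible subcategory. Then B, with the inherited exact structure, is itself a Frobenius category; moreover an object of B is projective in B if and only if it is projective when viewed as an object of A. -/

import Mathlib

universe v u

open CategoryTheory Limits

namespace Paper

variable {A : Type u} [Category.{v} A]

section Defs
variable [Preadditive A]

/-- `i` is a kernel of `d`. -/
def IsKer {X Y Z : A} (i : X ⟶ Y) (d : Y ⟶ Z) : Prop :=
  i ≫ d = 0 ∧ ∀ ⦃W : A⦄ (g : W ⟶ Y), g ≫ d = 0 → ∃! g' : W ⟶ X, g' ≫ i = g

/-- `d` is a cokernel of `i`. -/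
def IsCoker {X Y Z : A} (i : X ⟶ Y) (d : Y ⟶ Z) : Prop :=
  i ≫ d = 0 ∧ ∀ ⦃W : A⦄ (g : Y ⟶ W), i ≫ g = 0 → ∃! g' : Z ⟶ W, d ≫ g' = g

/-- An exact structure in the sense of Quillen (following Keller's axioms) on an
additive category `A`: a class of kernel-cokernel pairs (conflations), closed under
isomorphism, satisfying the axioms (Ex0), (Ex1), (Ex1op), (Ex2), (Ex2op). -/
structure ExactStructure (A : Type u) [Category.{v} A] [Preadditive A] where
  /-- the class of conflations `X ⟶ Y ⟶ Z` -/
  IsConflation : ∀ ⦃X Y Z : A⦄, (X ⟶ Y) → (Y ⟶ Z) → Prop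
  ker_of_conflation : ∀ ⦃X Y Z : A⦄ {i : X ⟶ Y} {d : Y ⟶ Z}, IsConflation i d → IsKer i d
  coker_of_conflation : ∀ ⦃X Y Z : A⦄ {i : X ⟶ Y} {d : Y ⟶ Z}, IsConflation i d → IsCoker i d
  iso_closed : ∀ ⦃X Y Z X' Y' Z' : A⦄ {i : X ⟶ Y} {d : Y ⟶ Z} {i' : X' ⟶ Y'} {d' : Y' ⟶ Z'}
    (eX : X ≅ X') (eY : Y ≅ Y') (eZ : Z ≅ Z'),
    i ≫ eY.hom = eX.hom ≫ i' → d ≫ eZ.hom = eY.hom ≫ d' →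
    IsConflation i d → IsConflation i' d'
  ex0 : ∀ ⦃Z : A⦄, IsZero Z → ∃ (X : A) (i : X ⟶ Z), IsConflation i (𝟙 Z)
  ex1 : ∀ ⦃Y Z W : A⦄ {d : Y ⟶ Z} {e : Z ⟶ W},
    (∃ (X : A) (i : X ⟶ Y), IsConflation i d) → (∃ (X : A) (i : X ⟶ Z), IsConflation i e) →
    ∃ (X : A) (i : X ⟶ Y), IsConflation i (d ≫ e)
  ex1op : ∀ ⦃X Y W : A⦄ {i : X ⟶ Y} {j : Y ⟶ W},
    (∃ (Z : A) (d : Y ⟶ Z), IsConflation i d) → (∃ (Z : A) (d : W ⟶ Z), IsConflation j d) →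
    ∃ (Z : A) (d : W ⟶ Z), IsConflation (i ≫ j) d
  ex2 : ∀ ⦃Y Z Z' : A⦄ (d : Y ⟶ Z) (f : Z' ⟶ Z),
    (∃ (X : A) (i : X ⟶ Y), IsConflation i d) →
    ∃ (Y' : A) (d' : Y' ⟶ Z') (f' : Y' ⟶ Y),
      IsPullback d' f' f d ∧ ∃ (X : A) (i : X ⟶ Y'), IsConflation i d'
  ex2op : ∀ ⦃X Y X' : A⦄ (i : X ⟶ Y) (f : X ⟶ X'),
    (∃ (Z : A) (d : Y ⟶ Z), IsConflation i d) →
    ∃ (Y' : A) (i' : X' ⟶ Y') (f' : Y ⟶ Y'),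
      IsPushout i f f' i' ∧ ∃ (Z : A) (d : Y' ⟶ Z), IsConflation i' d

namespace ExactStructure

variable (E : ExactStructure A)

/-- `d` is a deflation. -/
def IsDeflation {Y Z : A} (d : Y ⟶ Z) : Prop :=
  ∃ (X : A) (i : X ⟶ Y), E.IsConflation i d

/-- `i` is an inflation. -/
def IsInflation {X Y : A} (i : X ⟶ Y) : Prop :=
  ∃ (Z : A) (d : Y ⟶ Z), E.IsConflation i d

/-- projective object: every deflation onto it splits. -/
def Proj (P : A) : Prop :=
  ∀ ⦃Y : A⦄ (d : Y ⟶ P), E.IsDeflation d → ∃ s : P ⟶ Y, s ≫ d = 𝟙 P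

/-- injective object: every inflation out of it splits. -/
def Inj (I : A) : Prop :=
  ∀ ⦃Y : A⦄ (i : I ⟶ Y), E.IsInflation i → ∃ r : Y ⟶ I, i ≫ r = 𝟙 I

/-- enough projective objects -/
def EnoughProj : Prop :=
  ∀ X : A, ∃ (P : A) (d : P ⟶ X), E.Proj P ∧ E.IsDeflation d

/-- enough injective objects -/
def EnoughInj : Prop :=
  ∀ X : A, ∃ (I : A) (i : X ⟶ I), E.Inj I ∧ E.IsInflation i

/-- A Frobenius category: enough projectives, enough injectives, and the two classes coincide. -/
structure IsFrobenius : Prop where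
  enoughProj : E.EnoughProj
  enoughInj : E.EnoughInj
  proj_iff_inj : ∀ P : A, E.Proj P ↔ E.Inj P

end ExactStructure

end Defs

end Paper
namespace Paper

open CategoryTheory Limits

section AuxiliaryLemmas

variable {A : Type u} [Category.{v} A] [Preadditive A]

theorem IsKer.cancel {X Y Z : A} {i : X ⟶ Y} {d : Y ⟶ Z} (h : IsKer i d)
    {W : A} {a b : W ⟶ X} (hab : a ≫ i = b ≫ i) : a = b := by
  obtain ⟨g', hg', huniq⟩ := h.2 (b ≫ i) (by rw [Category.assoc, h.1, comp_zero])
  rw [huniq a hab, huniq b rfl]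

theorem IsCoker.cancel {X Y Z : A} {i : X ⟶ Y} {d : Y ⟶ Z} (h : IsCoker i d)
    {W : A} {a b : Z ⟶ W} (hab : d ≫ a = d ≫ b) : a = b := by
  obtain ⟨g', hg', huniq⟩ := h.2 (d ≫ b) (by rw [← Category.assoc, h.1, zero_comp])
  rw [huniq a hab, huniq b rfl]

theorem ExactStructure.conflation_of_isKer (E : ExactStructure A)
    {X X' Y Z : A} {i : X ⟶ Y} {i' : X' ⟶ Y} {d : Y ⟶ Z}
    (hc : E.IsConflation i d) (hk : IsKer i' d) : E.IsConflation i' d := by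
  have hk0 := E.ker_of_conflation hc
  obtain ⟨u, hu, -⟩ := hk.2 i hk0.1
  obtain ⟨v, hv, -⟩ := hk0.2 i' hk.1
  have huv : u ≫ v = 𝟙 X :=
    hk0.cancel (by rw [Category.assoc, hv, hu, Category.id_comp])
  have hvu : v ≫ u = 𝟙 X' :=
    hk.cancel (by rw [Category.assoc, hu, hv, Category.id_comp])
  exact E.iso_closed ⟨u, v, huv, hvu⟩ (Iso.refl Y) (Iso.refl Z)
    (by simp [hu]) (by simp) hc

theorem ExactStructure.conflation_of_isCoker (E : ExactStructure A)
    {X Y Z Z' : A} {i : X ⟶ Y} {d : Y ⟶ Z} {d' : Y ⟶ Z'}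
    (hc : E.IsConflation i d) (hk : IsCoker i d') : E.IsConflation i d' := by
  have hk0 := E.coker_of_conflation hc
  obtain ⟨u, hu, -⟩ := hk0.2 d' hk.1
  obtain ⟨v, hv, -⟩ := hk.2 d hk0.1
  have huv : u ≫ v = 𝟙 Z :=
    hk0.cancel (by rw [← Category.assoc, hu, hv, Category.comp_id])
  have hvu : v ≫ u = 𝟙 Z' :=
    hk.cancel (by rw [← Category.assoc, hv, hu, Category.comp_id])
  exact E.iso_closed (Iso.refl X) (Iso.refl Y) ⟨u, v, huv, hvu⟩
    (by simp) (by simp [hu]) hc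

theorem isKer_pullback {X Y Z Z' Y' : A} {i : X ⟶ Y} {d : Y ⟶ Z}
    (hk : IsKer i d) {d' : Y' ⟶ Z'} {f' : Y' ⟶ Y} {f : Z' ⟶ Z}
    (pb : IsPullback d' f' f d) :
    ∃ u : X ⟶ Y', u ≫ f' = i ∧ IsKer u d' := by
  have hw : (0 : X ⟶ Z') ≫ f = i ≫ d := by rw [zero_comp, hk.1]
  refine ⟨pb.lift 0 i hw, pb.lift_snd _ _ _, ?_, ?_⟩
  · exact pb.lift_fst _ _ _
  · intro W g hg
    have h1 : (g ≫ f') ≫ d = 0 := by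
      rw [Category.assoc, ← pb.w, ← Category.assoc, hg, zero_comp]
    obtain ⟨h, hh, hhuniq⟩ := hk.2 (g ≫ f') h1
    refine ⟨h, ?_, ?_⟩
    · apply pb.hom_ext
      · rw [Category.assoc, pb.lift_fst, comp_zero, hg]
      · rw [Category.assoc, pb.lift_snd, hh]
    · intro h' hh'
      exact hhuniq h' (by rw [← hh', Category.assoc, pb.lift_snd])

theorem isCoker_pushout {X X' Y Y' Z : A} {i : X ⟶ Y} {d : Y ⟶ Z}
    (hk : IsCoker i d) {f : X ⟶ X'} {f' : Y ⟶ Y'} {i' : X' ⟶ Y'}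
    (po : IsPushout i f f' i') :
    ∃ u : Y' ⟶ Z, f' ≫ u = d ∧ IsCoker i' u := by
  have hw : i ≫ d = f ≫ (0 : X' ⟶ Z) := by rw [hk.1, comp_zero]
  refine ⟨po.desc d 0 hw, po.inl_desc _ _ _, ?_, ?_⟩
  · exact po.inr_desc _ _ _
  · intro W g hg
    have h1 : i ≫ (f' ≫ g) = 0 := by
      rw [← Category.assoc, po.w, Category.assoc, hg, comp_zero]
    obtain ⟨h, hh, hhuniq⟩ := hk.2 (f' ≫ g) h1
    refine ⟨h, ?_, ?_⟩
    · apply po.hom_ext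
      · rw [← Category.assoc, po.inl_desc, hh]
      · rw [← Category.assoc, po.inr_desc, zero_comp, hg]
    · intro h' hh'
      exact hhuniq h' (by rw [← hh', ← Category.assoc, po.inl_desc])

theorem isKer_comp_pullback {Y Z W X₂ Y' : A} {d : Y ⟶ Z} {e : Z ⟶ W}
    {i₂ : X₂ ⟶ Z} (hk₂ : IsKer i₂ e) {d' : Y' ⟶ X₂} {f' : Y' ⟶ Y}
    (pb : IsPullback d' f' i₂ d) : IsKer f' (d ≫ e) := by
  constructor
  · rw [← Category.assoc, ← pb.w, Category.assoc, hk₂.1, comp_zero]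
  · intro W₀ g hg
    have h1 : (g ≫ d) ≫ e = 0 := by rw [Category.assoc]; exact hg
    obtain ⟨h, hh, -⟩ := hk₂.2 (g ≫ d) h1
    refine ⟨pb.lift h g hh, pb.lift_snd _ _ _, ?_⟩
    intro l' hl'
    apply pb.hom_ext
    · refine hk₂.cancel ?_
      rw [pb.lift_fst, Category.assoc, pb.w, ← Category.assoc, hl', hh]
    · rw [pb.lift_snd]; exact hl'

theorem isCoker_comp_pushout {X Y W Z₁ Y' : A} {i : X ⟶ Y} {j : Y ⟶ W}
    {d₁ : Y ⟶ Z₁} (hk₁ : IsCoker i d₁) {i' : Z₁ ⟶ Y'} {f' : W ⟶ Y'}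
    (po : IsPushout j d₁ f' i') : IsCoker (i ≫ j) f' := by
  constructor
  · rw [Category.assoc, po.w, ← Category.assoc, hk₁.1, zero_comp]
  · intro W₀ g hg
    have h1 : i ≫ (j ≫ g) = 0 := by rw [← Category.assoc]; exact hg
    obtain ⟨h, hh, -⟩ := hk₁.2 (j ≫ g) h1
    refine ⟨po.desc g h (by rw [hh]), po.inl_desc _ _ _, ?_⟩
    intro l' hl'
    apply po.hom_ext
    · rw [po.inl_desc]; exact hl'
    · refine hk₁.cancel ?_
      rw [po.inr_desc, ← Category.assoc, ← po.w, Category.assoc, hl', hh]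

theorem ExactStructure.proj_lift (E : ExactStructure A) {Q Y Z : A} (hQ : E.Proj Q)
    {e : Y ⟶ Z} (he : E.IsDeflation e) (f : Q ⟶ Z) : ∃ h : Q ⟶ Y, h ≫ e = f := by
  obtain ⟨Y', d', f', pb, hd⟩ := E.ex2 e f he
  obtain ⟨s, hs⟩ := hQ d' hd
  exact ⟨s ≫ f', by rw [Category.assoc, ← pb.w, ← Category.assoc, hs, Category.id_comp]⟩

theorem ExactStructure.inj_extend (E : ExactStructure A) {I X Y : A} (hI : E.Inj I)
    {j : X ⟶ Y} (hj : E.IsInflation j) (f : X ⟶ I) : ∃ h : Y ⟶ I, j ≫ h = f := by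
  obtain ⟨Y', i', f', po, hi⟩ := E.ex2op j f hj
  obtain ⟨r, hr⟩ := hI i' hi
  exact ⟨f' ≫ r, by rw [← Category.assoc, po.w, Category.assoc, hr, Category.comp_id]⟩

theorem ExactStructure.proj_of_retract (E : ExactStructure A) {P Q : A}
    (hQ : E.Proj Q) (s : P ⟶ Q) (t : Q ⟶ P) (hst : s ≫ t = 𝟙 P) : E.Proj P := by
  intro Y e he
  obtain ⟨h, hh⟩ := E.proj_lift hQ he t
  exact ⟨s ≫ h, by rw [Category.assoc, hh, hst]⟩

theorem ExactStructure.inj_of_retract (E : ExactStructure A) {I J : A}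
    (hJ : E.Inj J) (s : I ⟶ J) (t : J ⟶ I) (hst : s ≫ t = 𝟙 I) : E.Inj I := by
  intro Y j hj
  obtain ⟨h, hh⟩ := E.inj_extend hJ hj s
  exact ⟨h ≫ t, by rw [← Category.assoc, hh, hst]⟩

theorem fsub_hom_congr {Pr : A → Prop} {X Y : ObjectProperty.FullSubcategory Pr}
    {a b : X ⟶ Y} (h : a = b) : a.hom = b.hom := h ▸ rfl

theorem fsub_ext {Pr : A → Prop} {X Y : ObjectProperty.FullSubcategory Pr}
    {a b : X ⟶ Y} (h : a.hom = b.hom) : a = b := ObjectProperty.hom_ext (P := Pr) h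

theorem isPullback_of_ambient {Pr : A → Prop} {W X Y Z : ObjectProperty.FullSubcategory Pr}
    (fst : W ⟶ X) (snd : W ⟶ Y) (f : X ⟶ Z) (g : Y ⟶ Z)
    (h : IsPullback fst.hom snd.hom f.hom g.hom) :
    IsPullback fst snd f g := by
  have comm : fst ≫ f = snd ≫ g := fsub_ext h.w
  exact IsPullback.of_isLimit' ⟨comm⟩
    (PullbackCone.IsLimit.mk comm
      (fun s => ObjectProperty.homMk (h.lift s.fst.hom s.snd.hom (fsub_hom_congr s.condition)))
      (fun s => fsub_ext (h.lift_fst _ _ _))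
      (fun s => fsub_ext (h.lift_snd _ _ _))
      (fun s m hm1 hm2 => fsub_ext (h.hom_ext
        ((fsub_hom_congr hm1).trans (h.lift_fst _ _ _).symm)
        ((fsub_hom_congr hm2).trans (h.lift_snd _ _ _).symm))))

theorem isPushout_of_ambient {Pr : A → Prop} {W X Y Z : ObjectProperty.FullSubcategory Pr}
    (f : W ⟶ X) (g : W ⟶ Y) (inl : X ⟶ Z) (inr : Y ⟶ Z)
    (h : IsPushout f.hom g.hom inl.hom inr.hom) :
    IsPushout f g inl inr := by
  have comm : f ≫ inl = g ≫ inr := fsub_ext h.w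
  exact IsPushout.of_isColimit' ⟨comm⟩
    (PushoutCocone.IsColimit.mk comm
      (fun s => ObjectProperty.homMk (h.desc s.inl.hom s.inr.hom (fsub_hom_congr s.condition)))
      (fun s => fsub_ext (h.inl_desc _ _ _))
      (fun s => fsub_ext (h.inr_desc _ _ _))
      (fun s m hm1 hm2 => fsub_ext (h.hom_ext
        ((fsub_hom_congr hm1).trans (h.inl_desc _ _ _).symm)
        ((fsub_hom_congr hm2).trans (h.inr_desc _ _ _).symm))))

/-- The inherited exact structure on an extension-closed full additive subcategory. -/
def restrictE (E : ExactStructure A) (B : Set A)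
    (hBzero : ∃ Z ∈ B, IsZero Z)
    (hBext : ∀ ⦃X Y Z : A⦄ (i : X ⟶ Y) (d : Y ⟶ Z),
      E.IsConflation i d → X ∈ B → Z ∈ B → Y ∈ B) :
    ExactStructure (ObjectProperty.FullSubcategory (fun X : A => X ∈ B)) where
  IsConflation X Y Z i d :=
    E.IsConflation (X := X.obj) (Y := Y.obj) (Z := Z.obj) i.hom d.hom
  ker_of_conflation {X Y Z i d} h := by
    obtain ⟨h1, h2⟩ := E.ker_of_conflation h
    refine ⟨fsub_ext h1, fun W g hg => ?_⟩
    obtain ⟨g', hg', hu⟩ := h2 g.hom (fsub_hom_congr hg)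
    exact ⟨ObjectProperty.homMk g', fsub_ext hg',
      fun y hy => fsub_ext (hu y.hom (fsub_hom_congr hy))⟩
  coker_of_conflation {X Y Z i d} h := by
    obtain ⟨h1, h2⟩ := E.coker_of_conflation h
    refine ⟨fsub_ext h1, fun W g hg => ?_⟩
    obtain ⟨g', hg', hu⟩ := h2 g.hom (fsub_hom_congr hg)
    exact ⟨ObjectProperty.homMk g', fsub_ext hg',
      fun y hy => fsub_ext (hu y.hom (fsub_hom_congr hy))⟩
  iso_closed {X Y Z X' Y' Z' i d i' d'} eX eY eZ hi hd h :=
    E.iso_closed ⟨eX.hom.hom, eX.inv.hom, fsub_hom_congr eX.hom_inv_id, fsub_hom_congr eX.inv_hom_id⟩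
      ⟨eY.hom.hom, eY.inv.hom, fsub_hom_congr eY.hom_inv_id, fsub_hom_congr eY.inv_hom_id⟩
      ⟨eZ.hom.hom, eZ.inv.hom, fsub_hom_congr eZ.hom_inv_id, fsub_hom_congr eZ.inv_hom_id⟩
      (fsub_hom_congr hi) (fsub_hom_congr hd) h
  ex0 {Z} hZ := by
    obtain ⟨Z₀, hZ₀B, hZ₀⟩ := hBzero
    have hZA : IsZero Z.obj := by
      rw [IsZero.iff_id_eq_zero]
      exact fsub_hom_congr ((IsZero.iff_id_eq_zero Z).mp hZ)
    obtain ⟨X, i, hc⟩ := E.ex0 hZA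
    have hkk := E.ker_of_conflation hc
    have hi0 : i = 0 := by have h1 := hkk.1; rwa [Category.comp_id] at h1
    have hX : IsZero X := by
      rw [IsZero.iff_id_eq_zero]
      exact hkk.cancel (by simp [hi0])
    have e : X ≅ Z₀ := hX.iso hZ₀
    refine ⟨⟨Z₀, hZ₀B⟩, ObjectProperty.homMk (e.inv ≫ i), ?_⟩
    show E.IsConflation (e.inv ≫ i) (𝟙 Z.obj)
    exact E.iso_closed e (Iso.refl _) (Iso.refl _) (by simp) (by simp) hc
  ex1 {Y Z W d e} h₁ h₂ := by
    obtain ⟨X₁, i₁, hc₁⟩ := h₁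
    obtain ⟨X₂, i₂, hc₂⟩ := h₂
    obtain ⟨Y', d', f', pb, X₀, i₀, hc₀⟩ :=
      E.ex2 d.hom i₂.hom
        ⟨X₁.obj, i₁.hom, hc₁⟩
    obtain ⟨u, hu, hk_u⟩ := isKer_pullback (E.ker_of_conflation hc₁) pb
    have hcu : E.IsConflation u d' := E.conflation_of_isKer hc₀ hk_u
    have hY'B : Y' ∈ B := hBext u d' hcu X₁.property X₂.property
    have hkf : IsKer f' (d.hom ≫ e.hom) :=
      isKer_comp_pullback (E.ker_of_conflation hc₂) pb
    obtain ⟨X₃, i₃, hc₃⟩ :=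
      E.ex1 (Y := Y.obj) (Z := Z.obj) (W := W.obj) (d := d.hom) (e := e.hom)
        ⟨X₁.obj, i₁.hom, hc₁⟩ ⟨X₂.obj, i₂.hom, hc₂⟩
    exact ⟨⟨Y', hY'B⟩, ObjectProperty.homMk f', E.conflation_of_isKer hc₃ hkf⟩
  ex1op {X Y W i j} h₁ h₂ := by
    obtain ⟨Z₁, d₁, hc₁⟩ := h₁
    obtain ⟨Z₂, d₂, hc₂⟩ := h₂
    obtain ⟨Y', i', f', po, Z₀, d₀, hc₀⟩ :=
      E.ex2op j.hom d₁.hom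
        ⟨Z₂.obj, d₂.hom, hc₂⟩
    obtain ⟨u, hu, hk_u⟩ := isCoker_pushout (E.coker_of_conflation hc₂) po
    have hcu : E.IsConflation i' u := E.conflation_of_isCoker hc₀ hk_u
    have hY'B : Y' ∈ B := hBext i' u hcu Z₁.property Z₂.property
    have hkf : IsCoker (i.hom ≫ j.hom) f' :=
      isCoker_comp_pushout (E.coker_of_conflation hc₁) po
    obtain ⟨Z₃, d₃, hc₃⟩ :=
      E.ex1op (X := X.obj) (Y := Y.obj) (W := W.obj) (i := i.hom) (j := j.hom)
        ⟨Z₁.obj, d₁.hom, hc₁⟩ ⟨Z₂.obj, d₂.hom, hc₂⟩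
    exact ⟨⟨Y', hY'B⟩, ObjectProperty.homMk f', E.conflation_of_isCoker hc₃ hkf⟩
  ex2 {Y Z Z'} d f h := by
    obtain ⟨X, i, hc⟩ := h
    obtain ⟨Y', d', f', pb, X₀, i₀, hc₀⟩ :=
      E.ex2 d.hom f.hom
        ⟨X.obj, i.hom, hc⟩
    obtain ⟨u, hu, hk_u⟩ := isKer_pullback (E.ker_of_conflation hc) pb
    have hcu : E.IsConflation u d' := E.conflation_of_isKer hc₀ hk_u
    have hY'B : Y' ∈ B := hBext u d' hcu X.property Z'.property
    let Y'' : ObjectProperty.FullSubcategory (fun X : A => X ∈ B) := ⟨Y', hY'B⟩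
    let dd : Y'' ⟶ Z' := ObjectProperty.homMk d'
    let ff : Y'' ⟶ Y := ObjectProperty.homMk f'
    exact ⟨Y'', dd, ff, isPullback_of_ambient dd ff f d pb, X, ObjectProperty.homMk u, hcu⟩
  ex2op {X Y X'} i f h := by
    obtain ⟨Z, d, hc⟩ := h
    obtain ⟨Y', i', f', po, Z₀, d₀, hc₀⟩ :=
      E.ex2op i.hom f.hom
        ⟨Z.obj, d.hom, hc⟩
    obtain ⟨u, hu, hk_u⟩ := isCoker_pushout (E.coker_of_conflation hc) po
    have hcu : E.IsConflation i' u := E.conflation_of_isCoker hc₀ hk_u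
    have hY'B : Y' ∈ B := hBext i' u hcu X'.property Z.property
    let Y'' : ObjectProperty.FullSubcategory (fun X : A => X ∈ B) := ⟨Y', hY'B⟩
    let ii : X' ⟶ Y'' := ObjectProperty.homMk i'
    let ff : Y ⟶ Y'' := ObjectProperty.homMk f'
    exact ⟨Y'', ii, ff, isPushout_of_ambient i f ff ii po, Z, ObjectProperty.homMk u, hcu⟩

end AuxiliaryLemmas


/-- **Lemma (Section 2).** An admissible subcategory `B` of a Frobenius category `A`
(a full additive extension-closed subcategory such that every object of `B` fits into
conflations `B ⟶ P ⟶ B'` and `B'' ⟶ Q ⟶ B` in `B` with `P`, `Q` projective in `A`),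
equipped with the inherited exact structure, is itself a Frobenius category; moreover
an object of `B` is projective in `B` iff it is projective as an object of `A`. -/
theorem admissible_subcategory_isFrobenius
    {A : Type u} [Category.{v} A] [Preadditive A] [HasZeroObject A] [HasBinaryBiproducts A]
    (E : ExactStructure A) (hE : E.IsFrobenius) (B : Set A)
    -- `B` is an additive subcategory
    (hBzero : ∃ Z ∈ B, IsZero Z)
    (hBsum : ∀ X Y : A, X ∈ B → Y ∈ B → ∃ W ∈ B, Nonempty (W ≅ X ⊞ Y))
    -- `B` is closed under extensions
    (hBext : ∀ ⦃X Y Z : A⦄ (i : X ⟶ Y) (d : Y ⟶ Z),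
      E.IsConflation i d → X ∈ B → Z ∈ B → Y ∈ B)
    -- `B` is admissible
    (hBadm : ∀ X ∈ B,
      (∃ (P X' : A) (i : X ⟶ P) (d : P ⟶ X'),
        E.IsConflation i d ∧ P ∈ B ∧ X' ∈ B ∧ E.Proj P) ∧
      (∃ (Q X'' : A) (i : X'' ⟶ Q) (d : Q ⟶ X),
        E.IsConflation i d ∧ Q ∈ B ∧ X'' ∈ B ∧ E.Proj Q)) :
    ∃ E' : ExactStructure (ObjectProperty.FullSubcategory (fun X : A => X ∈ B)),
      (∀ ⦃X Y Z : ObjectProperty.FullSubcategory (fun X : A => X ∈ B)⦄ (i : X ⟶ Y) (d : Y ⟶ Z),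
        E'.IsConflation i d ↔ E.IsConflation (X := X.obj) (Y := Y.obj) (Z := Z.obj) i.hom d.hom) ∧
      E'.IsFrobenius ∧
      (∀ X : ObjectProperty.FullSubcategory (fun X : A => X ∈ B), E'.Proj X ↔ E.Proj X.obj) := by

  set E' := restrictE E B hBzero hBext with hE'
  have projAtoB : ∀ X : ObjectProperty.FullSubcategory (fun X : A => X ∈ B),
      E.Proj X.obj → E'.Proj X := by
    intro X hX Y d hd
    obtain ⟨K, k, hc⟩ := hd
    obtain ⟨s, hs⟩ := hX (Y := Y.obj) d.hom ⟨K.obj, k.hom, hc⟩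
    exact ⟨ObjectProperty.homMk s, fsub_ext hs⟩
  have injAtoB : ∀ X : ObjectProperty.FullSubcategory (fun X : A => X ∈ B),
      E.Inj X.obj → E'.Inj X := by
    intro X hX Y j hj
    obtain ⟨K, k, hc⟩ := hj
    obtain ⟨r, hr⟩ := hX (Y := Y.obj) j.hom ⟨K.obj, k.hom, hc⟩
    exact ⟨ObjectProperty.homMk r, fsub_ext hr⟩
  have projBtoA : ∀ X : ObjectProperty.FullSubcategory (fun X : A => X ∈ B),
      E'.Proj X → E.Proj X.obj := by
    intro X hX
    obtain ⟨-, Q, X'', i'', d'', hc, hQB, hX''B, hQproj⟩ := hBadm X.obj X.property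
    obtain ⟨s, hs⟩ := hX (Y := ⟨Q, hQB⟩) (ObjectProperty.homMk d'')
      ⟨⟨X'', hX''B⟩, ObjectProperty.homMk i'', hc⟩
    exact E.proj_of_retract hQproj s.hom d'' (fsub_hom_congr hs)
  have injBtoA : ∀ X : ObjectProperty.FullSubcategory (fun X : A => X ∈ B),
      E'.Inj X → E.Inj X.obj := by
    intro X hX
    obtain ⟨⟨P, X', i', d', hc, hPB, hX'B, hPproj⟩, -⟩ := hBadm X.obj X.property
    obtain ⟨r, hr⟩ := hX (Y := ⟨P, hPB⟩) (ObjectProperty.homMk i')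
      ⟨⟨X', hX'B⟩, ObjectProperty.homMk d', hc⟩
    exact E.inj_of_retract ((hE.proj_iff_inj P).mp hPproj) i' r.hom (fsub_hom_congr hr)
  refine ⟨E', fun X Y Z i d => Iff.rfl, ⟨?_, ?_, ?_⟩,
    fun X => ⟨projBtoA X, projAtoB X⟩⟩
  · intro X
    obtain ⟨-, Q, X'', i'', d'', hc, hQB, hX''B, hQproj⟩ := hBadm X.obj X.property
    exact ⟨⟨Q, hQB⟩, ObjectProperty.homMk d'', projAtoB ⟨Q, hQB⟩ hQproj, ⟨X'', hX''B⟩,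
      ObjectProperty.homMk i'', hc⟩
  · intro X
    obtain ⟨⟨P, X', i', d', hc, hPB, hX'B, hPproj⟩, -⟩ := hBadm X.obj X.property
    exact ⟨⟨P, hPB⟩, ObjectProperty.homMk i', injAtoB ⟨P, hPB⟩ ((hE.proj_iff_inj P).mp hPproj),
      ⟨X', hX'B⟩, ObjectProperty.homMk d', hc⟩
  · intro X
    exact ⟨fun h => injAtoB X ((hE.proj_iff_inj X.obj).mp (projBtoA X h)),
      fun h => projAtoB X ((hE.proj_iff_inj X.obj).mpr (injBtoA X h))⟩

end Paper
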